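/- For every positive integer s, every positive integer k, and every integer m ≥ s·k, Duplicator wins the game ehr[T_1^{(s,k,m)}, T_2^{(s,k,m)}, s; k]. -/

import Mathlib

/-! ## Rooted trees -/

/-- A rooted tree structure: a vertex type, a root, and a parent map
(`parent v = none` is intended to hold exactly when `v` is the root). -/
structure RTree where
  V : Type
  root : V
  parent : V → Option V

namespace RTree

/-- Iterate the parent map `n` times. -/
def parentIter (T : RTree) : ℕ → T.V → Option T.V
  | 0, v => some v
  | n + 1, v => (T.parent v).bind (T.parentIter n)

/-- `u` is a descendant of `v` (possibly `u = v`). -/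
def IsDesc (T : RTree) (v u : T.V) : Prop :=
  ∃ n, T.parentIter n u = some v

/-- The structure is a genuine rooted, locally finite tree:
exactly the root has no parent, every vertex reaches the root by iterating
the parent map (connectivity and acyclicity), and every vertex has finitely
many children (local finiteness). -/
def IsTree (T : RTree) : Prop :=
  (∀ v, T.parent v = none ↔ v = T.root) ∧
  (∀ v, ∃ n, T.parentIter n v = some T.root) ∧
  (∀ v, {u | T.parent u = some v}.Finite)

open Classical in
/-- The subtree `T(v)` consisting of `v` and all its descendants, rooted at `v`. -/
noncomputable def subtree (T : RTree) (v : T.V) : RTree where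
  V := {u : T.V // T.IsDesc v u}
  root := ⟨v, 0, rfl⟩
  parent u :=
    if u.1 = v then none
    else (T.parent u.1).bind fun w =>
      if h : T.IsDesc v w then some ⟨w, h⟩ else none

end RTree

/-- An isomorphism of rooted trees: a bijection of vertices mapping root to
root and commuting with the parent maps. -/
structure TreeIso (S T : RTree) where
  toEquiv : S.V ≃ T.V
  map_root : toEquiv S.root = T.root
  map_parent : ∀ v, (S.parent v).map toEquiv = T.parent (toEquiv v)

/-! ## First-order logic of rooted trees -/

/-- Terms: variables (de Bruijn indices) and the constant `R` for the root. -/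
inductive FOTerm where
  | var : ℕ → FOTerm
  | root : FOTerm
deriving DecidableEq

/-- First-order formulas in the language of rooted trees: equality `x = y`,
the parent relation `parentOf t t'` (meaning `π(t') = t`, i.e. `t` is the
parent of `t'`), Boolean connectives, and quantifiers (de Bruijn style). -/
inductive FOFormula where
  | eq : FOTerm → FOTerm → FOFormula
  | parentOf : FOTerm → FOTerm → FOFormula
  | not : FOFormula → FOFormula
  | and : FOFormula → FOFormula → FOFormula
  | or : FOFormula → FOFormula → FOFormula
  | imp : FOFormula → FOFormula → FOFormula
  | all : FOFormula → FOFormula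
  | ex : FOFormula → FOFormula
deriving DecidableEq

namespace FOTerm

def eval (T : RTree) (env : ℕ → T.V) : FOTerm → T.V
  | var n => env n
  | root => T.root

def freeBound : FOTerm → ℕ
  | var n => n + 1
  | root => 0

end FOTerm

/-- Kinds of quantifiers, used to count alternations. -/
inductive QKind where
  | ex | all
deriving DecidableEq

/-- The dual of a quantifier kind. -/
def QKind.dual : QKind → QKind
  | .ex => .all
  | .all => .ex

namespace FOFormula

/-- Satisfaction of a formula in a rooted tree under an environment. -/
def Sat (T : RTree) : FOFormula → (ℕ → T.V) → Prop
  | eq t₁ t₂, env => t₁.eval T env = t₂.eval T env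
  | parentOf t₁ t₂, env => T.parent (t₂.eval T env) = some (t₁.eval T env)
  | not φ, env => ¬ φ.Sat T env
  | and φ ψ, env => φ.Sat T env ∧ ψ.Sat T env
  | or φ ψ, env => φ.Sat T env ∨ ψ.Sat T env
  | imp φ ψ, env => φ.Sat T env → ψ.Sat T env
  | all φ, env => ∀ w : T.V, φ.Sat T (fun n => match n with | 0 => w | Nat.succ k => env k)
  | ex φ, env => ∃ w : T.V, φ.Sat T (fun n => match n with | 0 => w | Nat.succ k => env k)

/-- Quantifier depth: the maximum number of nested quantifiers. -/
def qd : FOFormula → ℕ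
  | eq _ _ => 0
  | parentOf _ _ => 0
  | not φ => φ.qd
  | and φ ψ => max φ.qd ψ.qd
  | or φ ψ => max φ.qd ψ.qd
  | imp φ ψ => max φ.qd ψ.qd
  | all φ => φ.qd + 1
  | ex φ => φ.qd + 1

/-- Auxiliary alternation count: `aqdAux φ pol q` is the maximum number of
alternations between (effectively) existential and universal quantifiers along
a nested quantifier sequence of `φ`, given the current polarity `pol`
(`true` = positive; negations and antecedents of implications flip it, so that
e.g. a `∀` under a negation counts as an `∃`) and the effective kind `q` of
the innermost enclosing quantifier (if any). -/
def aqdAux : FOFormula → Bool → Option QKind → ℕ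
  | eq _ _, _, _ => 0
  | parentOf _ _, _, _ => 0
  | not φ, pol, q => φ.aqdAux (!pol) q
  | and φ ψ, pol, q => max (φ.aqdAux pol q) (ψ.aqdAux pol q)
  | or φ ψ, pol, q => max (φ.aqdAux pol q) (ψ.aqdAux pol q)
  | imp φ ψ, pol, q => max (φ.aqdAux (!pol) q) (ψ.aqdAux pol q)
  | all φ, pol, q =>
      (if q = some (if pol then QKind.ex else QKind.all) then 1 else 0) +
        φ.aqdAux pol (some (if pol then QKind.all else QKind.ex))
  | ex φ, pol, q =>
      (if q = some (if pol then QKind.all else QKind.ex) then 1 else 0) +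
        φ.aqdAux pol (some (if pol then QKind.ex else QKind.all))

/-- The number of alternations of quantifiers of a formula: the maximum number
of switches between (effectively) existential and universal quantifiers in a
nested quantifier sequence.  Purely existential or purely universal formulas
have `aqd = 0`. -/
def aqd (φ : FOFormula) : ℕ := φ.aqdAux true none

/-- A bound on the free variables of a formula: all free de Bruijn indices
are `< freeBound`. -/
def freeBound : FOFormula → ℕ
  | eq t₁ t₂ => max t₁.freeBound t₂.freeBound
  | parentOf t₁ t₂ => max t₁.freeBound t₂.freeBound
  | not φ => φ.freeBound
  | and φ ψ => max φ.freeBound ψ.freeBound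
  | or φ ψ => max φ.freeBound ψ.freeBound
  | imp φ ψ => max φ.freeBound ψ.freeBound
  | all φ => φ.freeBound - 1
  | ex φ => φ.freeBound - 1

/-- A sentence is a formula with no free variables. -/
def IsSentence (φ : FOFormula) : Prop := φ.freeBound = 0

end FOFormula

/-- A (closed) formula holds in a rooted tree. -/
def Models (T : RTree) (φ : FOFormula) : Prop :=
  φ.Sat T (fun _ => T.root)

/-- The formula `P_i(x)`, with free variable `x` being de Bruijn index `0`:
`P_0(x) = ∀ y ¬(π(y) = x)` and `P_{i+1}(x) = ∀ y (π(y) = x → ¬ P_i(y))`. -/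
def Pform : ℕ → FOFormula
  | 0 => .all (.not (.parentOf (.var 1) (.var 0)))
  | i + 1 => .all (.imp (.parentOf (.var 1) (.var 0)) (.not (Pform i)))

/-- The sentence `KEIN_i = P_i(R)`. -/
def KEIN : ℕ → FOFormula
  | 0 => .all (.not (.parentOf .root (.var 0)))
  | i + 1 => .all (.imp (.parentOf .root (.var 0)) (.not (Pform i)))

/-! ## Ehrenfeucht games -/

/-- The winning condition for Duplicator: for all pairs `(x_i, y_i)`, `(x_j, y_j)`
in the list of selected/designated pairs, (Main 1) `π(x_j) = x_i ↔ π(y_j) = y_i`,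
and (Main 2) `x_i = x_j ↔ y_i = y_j`. -/
def GoodPairs (T₁ T₂ : RTree) (ps : List (T₁.V × T₂.V)) : Prop :=
  ∀ p ∈ ps, ∀ q ∈ ps,
    (T₁.parent p.1 = some q.1 ↔ T₂.parent p.2 = some q.2) ∧
    (p.1 = q.1 ↔ p.2 = q.2)

/-- Duplicator wins the scheduled Ehrenfeucht game on `T₁, T₂` in which Spoiler
must play his moves in consecutive batches, the batch sizes given by the list
`sched`, switching trees after each batch; `side = true` means Spoiler currently
plays on `T₁` (Duplicator answering on `T₂`), `side = false` means Spoiler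
currently plays on `T₂`.  The list `ps` records the pairs selected so far
(including designated pairs and the pair of roots); Duplicator wins when the
final configuration satisfies `GoodPairs`. -/
def DupWinsSched (T₁ T₂ : RTree) : List ℕ → Bool → List (T₁.V × T₂.V) → Prop
  | [], _, ps => GoodPairs T₁ T₂ ps
  | 0 :: rest, side, ps => DupWinsSched T₁ T₂ rest (!side) ps
  | (n + 1) :: rest, side, ps =>
      if side then
        ∀ x : T₁.V, ∃ y : T₂.V, DupWinsSched T₁ T₂ (n :: rest) side ((x, y) :: ps)
      else
        ∀ y : T₂.V, ∃ x : T₁.V, DupWinsSched T₁ T₂ (n :: rest) side ((x, y) :: ps)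
termination_by sched _ _ => (sched.length, sched.sum)
decreasing_by
  all_goals
    first
      | exact Prod.Lex.left _ _ (Nat.lt_succ_self _)
      | exact Prod.Lex.right _ (by simp [List.sum_cons])

/-- The cost (in switches) for Spoiler of playing on side `side` when his
previous move (if any) was on side `last`. -/
def switchCost (last : Option Bool) (side : Bool) : ℕ :=
  match last with
  | none => 0
  | some b => if b = side then 0 else 1

/-- Duplicator wins the Ehrenfeucht game `EHR` with `rounds` remaining rounds,
`sw` remaining switches allowed to Spoiler, `last` the side on which Spoiler
made his previous move (if any), and `ps` the pairs selected so far.  In each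
round Spoiler picks a side (paying a switch if he changes trees, which he may
do only if he has switches left) and a vertex in that tree, and Duplicator
answers in the other tree. -/
def DupWinsEHRAux (T₁ T₂ : RTree) :
    ℕ → ℕ → Option Bool → List (T₁.V × T₂.V) → Prop
  | 0, _, _, ps => GoodPairs T₁ T₂ ps
  | r + 1, sw, last, ps =>
      ∀ side : Bool, switchCost last side ≤ sw →
        if side then
          ∀ x : T₁.V, ∃ y : T₂.V,
            DupWinsEHRAux T₁ T₂ r (sw - switchCost last side) (some side) ((x, y) :: ps)
        else
          ∀ y : T₂.V, ∃ x : T₁.V,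
            DupWinsEHRAux T₁ T₂ r (sw - switchCost last side) (some side) ((x, y) :: ps)

/-- Duplicator wins the game `EHR[T₁, T₂, s, r]`: `r` rounds, Spoiler may start
on either tree and make at most `s` switches. -/
def DupWinsEHR (T₁ T₂ : RTree) (s r : ℕ) : Prop :=
  DupWinsEHRAux T₁ T₂ r s none [(T₁.root, T₂.root)]

/-! ## The trees `T₁^{(s,k,m)}` and `T₂^{(s,k,m)}` -/

/-- The one-vertex rooted tree. -/
def single : RTree where
  V := PUnit
  root := PUnit.unit
  parent := fun _ => none

/-- Hang the trees `f 0, …, f (n-1)` from a new root: the root of each `f i`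
becomes a child of the new root. -/
def hang (n : ℕ) (f : Fin n → RTree) : RTree where
  V := Unit ⊕ (Σ i : Fin n, (f i).V)
  root := Sum.inl ()
  parent := fun x =>
    match x with
    | Sum.inl _ => none
    | Sum.inr ⟨i, w⟩ =>
      match (f i).parent w with
      | none => some (Sum.inl ())
      | some w' => some (Sum.inr ⟨i, w'⟩)

/-- The pair of trees `(T₁^{(s,k,m)}, T₂^{(s,k,m)})`, indexed by `s` (the
parameter `k` plays no role in the construction).  Conventions for `s = 0`:
`T₁^{(0)}` is a single vertex and `T₂^{(0)}` is a star of `m` childless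
children.  For `s ≥ 1`: in `T₁^{(s+1)}` the root has `m+1` children, from each
of which hangs a copy of `T₂^{(s)}`; in `T₂^{(s+1)}` the root has `m+1`
children, from `m` of which hangs a copy of `T₂^{(s)}` and from the remaining
one hangs a copy of `T₁^{(s)}`. -/
def TreePair (m : ℕ) : ℕ → RTree × RTree
  | 0 => (single, hang m fun _ => single)
  | s + 1 =>
      (hang (m + 1) fun _ => (TreePair m s).2,
       hang (m + 1) fun i => if i.1 = m then (TreePair m s).1 else (TreePair m s).2)

/-- The tree `T₁^{(s,k,m)}`. -/
def Tree1 (s k m : ℕ) : RTree := (TreePair m s).1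

/-- The tree `T₂^{(s,k,m)}`. -/
def Tree2 (s k m : ℕ) : RTree := (TreePair m s).2


/-! ## Auxiliary development for the proof -/

namespace EhrAux

abbrev Q1 (m j : ℕ) : RTree := (TreePair m j).1
abbrev Q2 (m j : ℕ) : RTree := (TreePair m j).2

def specIdx (m : ℕ) : Fin (m+1) := ⟨m, Nat.lt_succ_self m⟩

def gtree (m j : ℕ) (i : Fin (m+1)) : RTree :=
  if i.1 = m then (TreePair m j).1 else (TreePair m j).2

lemma Q2_succ (m j : ℕ) : Q2 m (j+1) = hang (m+1) (gtree m j) := rfl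

lemma Q1_succ (m j : ℕ) : Q1 m (j+1) = hang (m+1) (fun _ => Q2 m j) := rfl

lemma gtree_eq_of_ne {m j : ℕ} {i : Fin (m+1)} (hi : i.1 ≠ m) : gtree m j i = Q2 m j :=
  if_neg hi

lemma gtree_eq_spec (m j : ℕ) : gtree m j (specIdx m) = Q1 m j := if_pos rfl

/-- Cast of vertices along an equality of trees. -/
def vcast {S T : RTree} (h : S = T) (v : S.V) : T.V := cast (congrArg RTree.V h) v

@[simp] lemma vcast_rfl {S : RTree} (v : S.V) : vcast rfl v = v := rfl

@[simp] lemma vcast_inj {S T : RTree} (h : S = T) {v w : S.V} :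
    vcast h v = vcast h w ↔ v = w := by subst h; simp

@[simp] lemma vcast_vcast {S T : RTree} (h : S = T) (v : T.V) :
    vcast h (vcast h.symm v) = v := by subst h; rfl

lemma parent_vcast {S T : RTree} (h : S = T) (v : S.V) :
    T.parent (vcast h v) = Option.map (vcast h) (S.parent v) := by
  subst h; simp [vcast]; cases S.parent v <;> rfl

/-- Vertices of `hang`: the root. -/
lemma hang_root (n : ℕ) (f : Fin n → RTree) : (hang n f).root = Sum.inl () := rfl

lemma hang_parent_inl (n : ℕ) (f : Fin n → RTree) :
    (hang n f).parent (Sum.inl ()) = none := rfl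

lemma hang_parent_inr (n : ℕ) (f : Fin n → RTree) (i : Fin n) (w : (f i).V) :
    (hang n f).parent (Sum.inr ⟨i, w⟩) =
      (match (f i).parent w with
       | none => some (Sum.inl ())
       | some w' => some (Sum.inr ⟨i, w'⟩)) := rfl

/-- Branch-vertex constructors. -/
def f1 (m j : ℕ) (i : Fin (m+1)) (w : (Q2 m j).V) : (Q1 m (j+1)).V :=
  Sum.inr ⟨i, w⟩

def dD (m j : ℕ) (i : Fin (m+1)) (hi : i.1 ≠ m) (w : (Q2 m j).V) : (Q2 m (j+1)).V :=
  Sum.inr (⟨i, vcast (gtree_eq_of_ne hi).symm w⟩ : Σ i : Fin (m+1), (gtree m j i).V)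

def dS (m j : ℕ) (e : (Q1 m j).V) : (Q2 m (j+1)).V :=
  Sum.inr (⟨specIdx m, vcast (gtree_eq_spec m j).symm e⟩ : Σ i : Fin (m+1), (gtree m j i).V)

lemma parent_f1 (m j : ℕ) (i : Fin (m+1)) (w : (Q2 m j).V) :
    (Q1 m (j+1)).parent (f1 m j i w) =
      (match (Q2 m j).parent w with
       | none => some (Q1 m (j+1)).root
       | some w' => some (f1 m j i w')) := by
  cases hp : (Q2 m j).parent w <;>
    simp [f1, Q1_succ, hang_parent_inr, hp, hang_root]

lemma parent_dD (m j : ℕ) (i : Fin (m+1)) (hi : i.1 ≠ m) (w : (Q2 m j).V) :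
    (Q2 m (j+1)).parent (dD m j i hi w) =
      (match (Q2 m j).parent w with
       | none => some (Q2 m (j+1)).root
       | some w' => some (dD m j i hi w')) := by
  have h := (gtree_eq_of_ne (m := m) (j := j) hi).symm
  show (hang (m+1) (gtree m j)).parent (Sum.inr ⟨i, vcast h w⟩) = _
  rw [hang_parent_inr, parent_vcast]
  cases hp : (Q2 m j).parent w <;> simp [hp] <;> rfl

lemma parent_dS (m j : ℕ) (e : (Q1 m j).V) :
    (Q2 m (j+1)).parent (dS m j e) =
      (match (Q1 m j).parent e with
       | none => some (Q2 m (j+1)).root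
       | some e' => some (dS m j e')) := by
  have h := (gtree_eq_spec m j).symm
  show (hang (m+1) (gtree m j)).parent (Sum.inr ⟨specIdx m, vcast h e⟩) = _
  rw [hang_parent_inr, parent_vcast]
  cases hp : (Q1 m j).parent e <;> simp [hp] <;> rfl

end EhrAux

namespace EhrAux

/-! ### Injectivity and discrimination lemmas -/

lemma f1_inj {m j : ℕ} {i i' : Fin (m+1)} {w w' : (Q2 m j).V} :
    f1 m j i w = f1 m j i' w' ↔ i = i' ∧ w = w' := by
  unfold f1
  erw [Sum.inr.injEq, Sigma.mk.inj_iff]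
  constructor
  · rintro ⟨rfl, h⟩; exact ⟨rfl, eq_of_heq h⟩
  · rintro ⟨rfl, rfl⟩; exact ⟨rfl, HEq.rfl⟩

lemma f1_ne_root {m j : ℕ} (i : Fin (m+1)) (w : (Q2 m j).V) :
    f1 m j i w ≠ (Q1 m (j+1)).root := by
  intro h; exact Sum.inr_ne_inl h

lemma dD_eq_dD_iff {m j : ℕ} {i i' : Fin (m+1)} (hi : i.1 ≠ m) (hi' : i'.1 ≠ m)
    {w w' : (Q2 m j).V} :
    dD m j i hi w = dD m j i' hi' w' ↔ i = i' ∧ w = w' := by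
  unfold dD
  erw [Sum.inr.injEq, Sigma.mk.inj_iff]
  constructor
  · rintro ⟨rfl, h⟩
    refine ⟨rfl, ?_⟩
    have h2 : vcast (gtree_eq_of_ne hi).symm w = vcast (gtree_eq_of_ne hi).symm w' :=
      eq_of_heq h
    exact (vcast_inj _).1 h2
  · rintro ⟨rfl, rfl⟩; exact ⟨rfl, HEq.rfl⟩

lemma dS_eq_dS_iff {m j : ℕ} {e e' : (Q1 m j).V} :
    dS m j e = dS m j e' ↔ e = e' := by
  unfold dS
  erw [Sum.inr.injEq, Sigma.mk.inj_iff]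
  constructor
  · rintro ⟨-, h⟩; exact (vcast_inj _).1 (eq_of_heq h)
  · rintro rfl; exact ⟨rfl, HEq.rfl⟩

lemma dD_ne_dS {m j : ℕ} {i : Fin (m+1)} (hi : i.1 ≠ m) (w : (Q2 m j).V)
    (e : (Q1 m j).V) : dD m j i hi w ≠ dS m j e := by
  intro h
  unfold dD dS at h
  erw [Sum.inr.injEq, Sigma.mk.inj_iff] at h
  exact hi (congrArg Fin.val h.1)

lemma dD_ne_root {m j : ℕ} {i : Fin (m+1)} (hi : i.1 ≠ m) (w : (Q2 m j).V) :
    dD m j i hi w ≠ (Q2 m (j+1)).root := by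
  intro h; exact Sum.inr_ne_inl h

lemma dS_ne_root {m j : ℕ} (e : (Q1 m j).V) :
    dS m j e ≠ (Q2 m (j+1)).root := by
  intro h; exact Sum.inr_ne_inl h

/-! ### Roots and parents -/

lemma hang_parent_eq_none_iff {n : ℕ} {f : Fin n → RTree} (v : (hang n f).V) :
    (hang n f).parent v = none ↔ v = (hang n f).root := by
  rcases v with u | ⟨i, w⟩
  · cases u; simp [hang_root, hang_parent_inl]; rfl
  · rw [hang_parent_inr]
    cases hp : (f i).parent w <;> simp [hang_root]

lemma Q1_parent_eq_none_iff {m j : ℕ} (v : (Q1 m j).V) :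
    (Q1 m j).parent v = none ↔ v = (Q1 m j).root := by
  cases j with
  | zero =>
      constructor
      · intro _; rfl
      · intro _; rfl
  | succ j => exact hang_parent_eq_none_iff v

lemma Q2_parent_eq_none_iff {m j : ℕ} (v : (Q2 m j).V) :
    (Q2 m j).parent v = none ↔ v = (Q2 m j).root := by
  cases j with
  | zero => exact hang_parent_eq_none_iff v
  | succ j => exact hang_parent_eq_none_iff v

lemma Q1_parent_root {m j : ℕ} : (Q1 m j).parent (Q1 m j).root = none := by
  cases j with
  | zero => rfl
  | succ j => rfl

lemma Q2_parent_root {m j : ℕ} : (Q2 m j).parent (Q2 m j).root = none := by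
  cases j with
  | zero => rfl
  | succ j => rfl

end EhrAux

namespace EhrAux

/-- The key invariant: the discrepancy structure at level `j`, with capacity
`b` and active level `a`.  The list `ps` records (deficient-side first) the
pairs selected so far within this discrepancy pair. -/
def Inv (m : ℕ) : (j : ℕ) → ℕ → ℕ → List ((Q2 m j).V × (Q1 m j).V) → Prop
  | 0, _b, a, ps => a = 0 ∧ ∀ p ∈ ps, p = ((Q2 m 0).root, (Q1 m 0).root)
  | j+1, b, a, ps =>
      ∃ (σ : List (Fin (m+1) × Fin (m+1)))
        (sp : Option (Fin (m+1) × List ((Q2 m j).V × (Q1 m j).V))),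
        (∀ q ∈ σ, (q.1 : Fin (m+1)).1 ≠ m) ∧
        σ.Pairwise (fun q q' => q.1 ≠ q'.1 ∧ q.2 ≠ q'.2) ∧
        σ.length + (match sp with | none => 0 | some _ => 1) ≤ b ∧
        (match sp with
         | none => a = j + 1
         | some (i₀, qs) => (∀ q ∈ σ, q.2 ≠ i₀) ∧ a ≤ j ∧ Inv m j b a qs) ∧
        (∀ p ∈ ps,
          p = ((Q2 m (j+1)).root, (Q1 m (j+1)).root) ∨
          (∃ q ∈ σ, ∃ (hq : (q.1 : Fin (m+1)).1 ≠ m) (w : (Q2 m j).V),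
            p = (dD m j q.1 hq w, f1 m j q.2 w)) ∨
          (∃ i₀ qs, sp = some (i₀, qs) ∧ ∃ cw ew, (cw, ew) ∈ qs ∧
            p = (dS m j ew, f1 m j i₀ cw)))

lemma Inv_mono (m : ℕ) : ∀ (j b b' a : ℕ) (ps : List ((Q2 m j).V × (Q1 m j).V)),
    b ≤ b' → Inv m j b a ps → Inv m j b' a ps := by
  intro j
  induction j with
  | zero => intro b b' a ps _ h; exact h
  | succ j ih =>
      rintro b b' a ps hb ⟨σ, sp, h1, h2, h3, h4, h5⟩
      refine ⟨σ, sp, h1, h2, le_trans h3 hb, ?_, h5⟩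
      match sp with
      | none => exact h4
      | some (i₀, qs) =>
          obtain ⟨ha, hb2, hInv2⟩ := h4
          exact ⟨ha, hb2, ih b b' a qs hb hInv2⟩

lemma Inv_le (m : ℕ) : ∀ (j b a : ℕ) (ps : List ((Q2 m j).V × (Q1 m j).V)),
    Inv m j b a ps → a ≤ j := by
  intro j
  cases j with
  | zero => intro b a ps h; exact le_of_eq h.1
  | succ j =>
      rintro b a ps ⟨σ, sp, h1, h2, h3, h4, h5⟩
      match sp with
      | none => exact le_of_eq h4
      | some (i₀, qs) => exact le_trans h4.2.1 (Nat.le_succ j)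

lemma Inv_root_iff (m : ℕ) : ∀ (j b a : ℕ) (ps : List ((Q2 m j).V × (Q1 m j).V)),
    Inv m j b a ps → ∀ p ∈ ps, (p.1 = (Q2 m j).root ↔ p.2 = (Q1 m j).root) := by
  intro j
  cases j with
  | zero =>
      intro b a ps h p hp
      rw [h.2 p hp]
      simp
  | succ j =>
      rintro b a ps ⟨σ, sp, h1, h2, h3, h4, h5⟩ p hp
      rcases h5 p hp with rfl | ⟨q, hq, hq1, w, rfl⟩ | ⟨i₀, qs, hsp, cw, ew, hmem, rfl⟩
      · simp
      · simp only []
        constructor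
        · intro h; exact absurd h (dD_ne_root hq1 w)
        · intro h; exact absurd h (f1_ne_root q.2 w)
      · simp only []
        constructor
        · intro h; exact absurd h (dS_ne_root ew)
        · intro h; exact absurd h (f1_ne_root i₀ cw)

end EhrAux

namespace EhrAux

variable {m j : ℕ}

lemma pdD_root {i : Fin (m+1)} (hi : i.1 ≠ m) (w : (Q2 m j).V) :
    (Q2 m (j+1)).parent (dD m j i hi w) = some (Q2 m (j+1)).root ↔
      (Q2 m j).parent w = none := by
  rw [parent_dD]
  cases hpw : (Q2 m j).parent w <;>
    simp [hpw, (dD_ne_root hi _)]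

lemma pdD_dD {i i' : Fin (m+1)} (hi : i.1 ≠ m) (hi' : i'.1 ≠ m)
    (w w' : (Q2 m j).V) :
    (Q2 m (j+1)).parent (dD m j i hi w) = some (dD m j i' hi' w') ↔
      (i = i' ∧ (Q2 m j).parent w = some w') := by
  rw [parent_dD]
  cases hpw : (Q2 m j).parent w with
  | none => simp [(dD_ne_root hi' w').symm]
  | some u => simp [dD_eq_dD_iff hi hi', hpw, And.comm]

lemma pdD_dS {i : Fin (m+1)} (hi : i.1 ≠ m) (w : (Q2 m j).V) (e : (Q1 m j).V) :
    ¬ (Q2 m (j+1)).parent (dD m j i hi w) = some (dS m j e) := by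
  rw [parent_dD]
  cases hpw : (Q2 m j).parent w with
  | none => simp [(dS_ne_root e).symm]
  | some u => simp [dD_ne_dS hi u e]

lemma pdS_root (e : (Q1 m j).V) :
    (Q2 m (j+1)).parent (dS m j e) = some (Q2 m (j+1)).root ↔
      (Q1 m j).parent e = none := by
  rw [parent_dS]
  cases hpw : (Q1 m j).parent e <;>
    simp [hpw, (dS_ne_root _)]

lemma pdS_dS (e e' : (Q1 m j).V) :
    (Q2 m (j+1)).parent (dS m j e) = some (dS m j e') ↔
      (Q1 m j).parent e = some e' := by
  rw [parent_dS]
  cases hpw : (Q1 m j).parent e with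
  | none => simp [(dS_ne_root e').symm]
  | some u => simp [dS_eq_dS_iff, hpw]

lemma pdS_dD {i : Fin (m+1)} (hi : i.1 ≠ m) (e : (Q1 m j).V) (w : (Q2 m j).V) :
    ¬ (Q2 m (j+1)).parent (dS m j e) = some (dD m j i hi w) := by
  rw [parent_dS]
  cases hpw : (Q1 m j).parent e with
  | none => simp [(dD_ne_root hi w).symm]
  | some u => simp [(dD_ne_dS hi w u).symm]

lemma pf1_root (i : Fin (m+1)) (w : (Q2 m j).V) :
    (Q1 m (j+1)).parent (f1 m j i w) = some (Q1 m (j+1)).root ↔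
      (Q2 m j).parent w = none := by
  rw [parent_f1]
  cases hpw : (Q2 m j).parent w <;>
    simp [hpw, (f1_ne_root _ _)]

lemma pf1_f1 (i i' : Fin (m+1)) (w w' : (Q2 m j).V) :
    (Q1 m (j+1)).parent (f1 m j i w) = some (f1 m j i' w') ↔
      (i = i' ∧ (Q2 m j).parent w = some w') := by
  rw [parent_f1]
  cases hpw : (Q2 m j).parent w with
  | none => simp [(f1_ne_root i' w').symm]
  | some u => simp [f1_inj, hpw, And.comm]

end EhrAux

namespace EhrAux

theorem Inv_good (m : ℕ) : ∀ (j b a : ℕ) (ps : List ((Q2 m j).V × (Q1 m j).V)),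
    Inv m j b a ps → GoodPairs (Q2 m j) (Q1 m j) ps := by
  intro j
  induction j with
  | zero =>
      intro b a ps h p hp q hq
      rw [h.2 p hp, h.2 q hq]
      constructor
      · constructor <;> intro h' <;> rw [Q2_parent_root] at * <;>
          first | exact absurd h' (by simp [Q1_parent_root]) | simp_all [Q1_parent_root]
      · simp
  | succ j ih =>
      rintro b a ps ⟨σ, sp, h1, h2, h3, h4, h5⟩ p hp q hq
      have hpair := by
        haveI : Std.Symm
          (fun (q q' : Fin (m+1) × Fin (m+1)) => q.1 ≠ q'.1 ∧ q.2 ≠ q'.2) :=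
          ⟨by intro x y hxy; exact ⟨hxy.1.symm, hxy.2.symm⟩⟩
        exact List.Pairwise.forall h2
      rcases h5 p hp with rfl | ⟨qp, hqp, hqp1, w1, rfl⟩ | ⟨i₀, qs, hsp, cw1, ew1, hm1, rfl⟩
      · -- p is the root pair
        rcases h5 q hq with rfl | ⟨qq, hqq, hqq1, w2, rfl⟩ | ⟨i₀, qs, hsp, cw2, ew2, hm2, rfl⟩
        · constructor
          · simp [Q2_parent_root, Q1_parent_root]
          · simp
        · constructor
          · simp [Q2_parent_root, Q1_parent_root]
          · simp only []
            constructor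
            · intro h; exact absurd h.symm (dD_ne_root hqq1 w2)
            · intro h; exact absurd h.symm (f1_ne_root qq.2 w2)
        · constructor
          · simp [Q2_parent_root, Q1_parent_root]
          · simp only []
            constructor
            · intro h; exact absurd h.symm (dS_ne_root ew2)
            · intro h; exact absurd h.symm (f1_ne_root i₀ cw2)
      · -- p is a normal-branch pair
        rcases h5 q hq with rfl | ⟨qq, hqq, hqq1, w2, rfl⟩ | ⟨i₀, qs, hsp, cw2, ew2, hm2, rfl⟩
        · -- q root
          constructor
          · simp only []
            rw [pdD_root hqp1 w1, pf1_root qp.2 w1]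
          · simp only []
            constructor
            · intro h; exact absurd h (dD_ne_root hqp1 w1)
            · intro h; exact absurd h (f1_ne_root qp.2 w1)
        · -- q normal
          by_cases hqe : qp = qq
          · subst hqe
            constructor
            · simp only []
              rw [pdD_dD hqp1 hqq1 w1 w2, pf1_f1 qp.2 qp.2 w1 w2]
              simp
            · simp only []
              rw [dD_eq_dD_iff hqp1 hqq1, f1_inj]
              simp
          · obtain ⟨hne1, hne2⟩ := hpair hqp hqq hqe
            constructor
            · simp only []
              rw [pdD_dD hqp1 hqq1 w1 w2, pf1_f1 qp.2 qq.2 w1 w2]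
              simp [hne1, hne2]
            · simp only []
              rw [dD_eq_dD_iff hqp1 hqq1, f1_inj]
              simp [hne1, hne2]
        · -- q special
          have hne2 : qp.2 ≠ i₀ := by
            rw [hsp] at h4; exact h4.1 qp hqp
          constructor
          · simp only []
            constructor
            · intro h; exact absurd h (pdD_dS hqp1 w1 ew2)
            · intro h
              rw [pf1_f1 qp.2 i₀ w1 cw2] at h
              exact absurd h.1 hne2
          · simp only []
            constructor
            · intro h; exact absurd h (dD_ne_dS hqp1 w1 ew2)
            · intro h; rw [f1_inj] at h; exact absurd h.1 hne2
      · -- p is a special-branch pair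
        rcases h5 q hq with rfl | ⟨qq, hqq, hqq1, w2, rfl⟩ | ⟨i₀', qs', hsp', cw2, ew2, hm2, rfl⟩
        · -- q root
          have hinner : Inv m j b a qs := by rw [hsp] at h4; exact h4.2.2
          have hri := Inv_root_iff m j b a qs hinner (cw1, ew1) hm1
          constructor
          · simp only []
            rw [pdS_root ew1, pf1_root i₀ cw1]
            rw [Q2_parent_eq_none_iff, Q1_parent_eq_none_iff]
            exact (hri.symm)
          · simp only []
            constructor
            · intro h; exact absurd h (dS_ne_root ew1)
            · intro h; exact absurd h (f1_ne_root i₀ cw1)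
        · -- q normal
          have hne2 : qq.2 ≠ i₀ := by
            rw [hsp] at h4; exact h4.1 qq hqq
          constructor
          · simp only []
            constructor
            · intro h; exact absurd h (pdS_dD hqq1 ew1 w2)
            · intro h
              rw [pf1_f1 i₀ qq.2 cw1 w2] at h
              exact absurd h.1.symm hne2
          · simp only []
            constructor
            · intro h; exact absurd h.symm (dD_ne_dS hqq1 w2 ew1)
            · intro h; rw [f1_inj] at h; exact absurd h.1.symm hne2
        · -- q special
          rw [hsp] at hsp'
          obtain ⟨he1, he2⟩ : i₀ = i₀' ∧ qs = qs' := by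
            have := Option.some.inj hsp'
            exact ⟨congrArg Prod.fst this, congrArg Prod.snd this⟩
          subst he1; subst he2
          have hinner : Inv m j b a qs := by rw [hsp] at h4; exact h4.2.2
          have hg := ih b a qs hinner (cw1, ew1) hm1 (cw2, ew2) hm2
          constructor
          · simp only []
            rw [pdS_dS ew1 ew2, pf1_f1 i₀ i₀ cw1 cw2]
            simp only [true_and, eq_self_iff_true]
            exact (hg.1).symm
          · simp only []
            rw [dS_eq_dS_iff, f1_inj]
            simp only [true_and, eq_self_iff_true]
            exact (hg.2).symm
  
end EhrAux

namespace EhrAux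

lemma exists_fresh {m : ℕ} (t : Finset (Fin (m+1))) (h : t.card ≤ m) :
    ∃ i, i ∉ t := by
  by_contra h'
  push_neg at h'
  have hsub : (Finset.univ : Finset (Fin (m+1))) ⊆ t := fun i _ => h' i
  have := Finset.card_le_card hsub
  simp [Finset.card_univ] at this
  omega

lemma Inv_nil (m : ℕ) (j b : ℕ) : Inv m j b j [] := by
  cases j with
  | zero => exact ⟨rfl, by simp⟩
  | succ j =>
      exact ⟨[], none, by simp, by simp, by simp, rfl, by simp⟩

theorem forth (m : ℕ) : ∀ j : ℕ,
    (∀ (b a : ℕ) (ps : List ((Q2 m j).V × (Q1 m j).V)),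
      Inv m j b a ps → b < m → ¬(a = 0 ∧ Odd j) →
      ∀ y : (Q1 m j).V, ∃ (x : (Q2 m j).V) (a' : ℕ),
        (a' = a ∨ (a' + 1 = a ∧ Odd (j - a))) ∧ Inv m j (b+1) a' ((x, y) :: ps))
    ∧
    (∀ (b a : ℕ) (ps : List ((Q2 m j).V × (Q1 m j).V)),
      Inv m j b a ps → b < m → ¬(a = 0 ∧ Even j) →
      ∀ x : (Q2 m j).V, ∃ (y : (Q1 m j).V) (a' : ℕ),
        (a' = a ∨ (a' + 1 = a ∧ Even (j - a))) ∧ Inv m j (b+1) a' ((x, y) :: ps)) := by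
  intro j
  induction j with
  | zero =>
      constructor
      · intro b a ps hInv hb hpre y
        refine ⟨(Q2 m 0).root, a, Or.inl rfl, hInv.1, ?_⟩
        intro p hp
        rcases List.mem_cons.1 hp with rfl | hp'
        · cases y; rfl
        · exact hInv.2 p hp'
      · intro b a ps hInv hb hpre x
        rcases x with u | ⟨i, w⟩
        · cases u
          refine ⟨(Q1 m 0).root, a, Or.inl rfl, hInv.1, ?_⟩
          intro p hp
          rcases List.mem_cons.1 hp with rfl | hp'
          · rfl
          · exact hInv.2 p hp'
        · exact absurd ⟨hInv.1, Even.zero⟩ hpre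
  | succ j ih =>
      obtain ⟨ihF, ihD⟩ := ih
      constructor
      -- ==================== forthF (j+1) ====================
      · rintro b a ps ⟨σ, sp, h1, h2, h3, h4, h5⟩ hb hpre y
        rcases y with u | ⟨iF, w⟩
        · -- Spoiler plays the root of Q1
          cases u
          refine ⟨(Q2 m (j+1)).root, a, Or.inl rfl,
            Inv_mono m (j+1) b (b+1) a _ (Nat.le_succ b) ⟨σ, sp, h1, h2, h3, h4, ?_⟩⟩
          intro p hp
          rcases List.mem_cons.1 hp with rfl | hp'
          · exact Or.inl rfl
          · exact h5 p hp'
        · -- Spoiler plays in branch iF of Q1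
          match hspe : sp with
          | some (i₀, qs) =>
            have h3' : σ.length + 1 ≤ b := h3
            obtain ⟨h41, h42, h43⟩ : (∀ q ∈ σ, q.2 ≠ i₀) ∧ a ≤ j ∧ Inv m j b a qs := h4
            by_cases hiF : iF = i₀
            · -- the active special branch: recurse (inner deficient side)
              have hpre' : ¬(a = 0 ∧ Even j) := by
                intro ⟨ha, hev⟩
                exact hpre ⟨ha, Nat.odd_add_one.mpr (Nat.not_odd_iff_even.mpr hev)⟩
              obtain ⟨e, a', hcase, hInv'⟩ := ihD b a qs h43 hb hpre' w
              rw [hiF]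
              refine ⟨dS m j e, a', ?_, ?_⟩
              · rcases hcase with rfl | ⟨hs1, hs2⟩
                · exact Or.inl rfl
                · refine Or.inr ⟨hs1, ?_⟩
                  have hrw : j + 1 - a = (j - a) + 1 := by omega
                  rw [hrw]
                  exact Nat.odd_add_one.mpr (Nat.not_odd_iff_even.mpr hs2)
              · refine ⟨σ, some (i₀, (w, e) :: qs), h1, h2,
                  (by show σ.length + 1 ≤ b + 1; omega),
                  ⟨h41, Inv_le m j (b+1) a' _ hInv', hInv'⟩, ?_⟩
                intro p hp
                rcases List.mem_cons.1 hp with rfl | hp'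
                · exact Or.inr (Or.inr ⟨i₀, (w, e) :: qs, rfl, w, e,
                    List.mem_cons_self, rfl⟩)
                · rcases h5 p hp' with h | ⟨q, hq, hq1, w', rfl⟩ |
                    ⟨i₀', qs', hsp', cw, ew, hmw, rfl⟩
                  · exact Or.inl h
                  · exact Or.inr (Or.inl ⟨q, hq, hq1, w', rfl⟩)
                  · simp only [Option.some.injEq, Prod.mk.injEq] at hsp'
                    obtain ⟨he1, he2⟩ := hsp'
                    subst he1; subst he2
                    exact Or.inr (Or.inr ⟨i₀, (w, e) :: qs, rfl, cw, ew,
                      List.mem_cons_of_mem _ hmw, rfl⟩)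
            · -- not the special branch
              by_cases hmem : ∃ q ∈ σ, q.2 = iF
              · obtain ⟨q, hqσ, hq2⟩ := hmem
                refine ⟨dD m j q.1 (h1 q hqσ) w, a, Or.inl rfl, ?_⟩
                refine ⟨σ, some (i₀, qs), h1, h2,
                  (by show σ.length + 1 ≤ b + 1; omega),
                  ⟨h41, h42, Inv_mono m j b (b+1) a qs (Nat.le_succ b) h43⟩, ?_⟩
                intro p hp
                rcases List.mem_cons.1 hp with rfl | hp'
                · exact Or.inr (Or.inl ⟨q, hqσ, h1 q hqσ, w, by rw [hq2]; rfl⟩)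
                · rcases h5 p hp' with h | h | ⟨i₀', qs', hsp', cw, ew, hmw, rfl⟩
                  · exact Or.inl h
                  · exact Or.inr (Or.inl h)
                  · simp only [Option.some.injEq, Prod.mk.injEq] at hsp'
                    obtain ⟨he1, he2⟩ := hsp'
                    subst he1; subst he2
                    exact Or.inr (Or.inr ⟨i₀, qs, rfl, cw, ew, hmw, rfl⟩)
              · -- fresh branch needed
                push_neg at hmem
                obtain ⟨iD, hiDfresh⟩ := exists_fresh
                  ((σ.map Prod.fst).toFinset ∪ {specIdx m}) (by
                    have hc1 : ((σ.map Prod.fst).toFinset ∪ {specIdx m}).card ≤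
                        (σ.map Prod.fst).toFinset.card + 1 := by
                      simpa using Finset.card_union_le (σ.map Prod.fst).toFinset {specIdx m}
                    have hc2 := (σ.map Prod.fst).toFinset_card_le
                    simp only [List.length_map] at hc2
                    omega)
                simp only [Finset.mem_union, Finset.mem_singleton, List.mem_toFinset,
                  List.mem_map, not_or, not_exists] at hiDfresh
                obtain ⟨hiD1, hiD2⟩ := hiDfresh
                have hiDm : iD.1 ≠ m := fun h => hiD2 (Fin.ext h)
                have hiDs : ∀ q ∈ σ, q.1 ≠ iD := fun q hq h => hiD1 q ⟨hq, h⟩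
                refine ⟨dD m j iD hiDm w, a, Or.inl rfl, ?_⟩
                refine ⟨(iD, iF) :: σ, some (i₀, qs), ?_, ?_,
                  (by show σ.length + 1 + 1 ≤ b + 1; omega), ?_, ?_⟩
                · intro q hq
                  rcases List.mem_cons.1 hq with rfl | hq'
                  · exact hiDm
                  · exact h1 q hq'
                · refine List.Pairwise.cons ?_ h2
                  intro q hq
                  exact ⟨fun h => (hiDs q hq) h.symm, fun h => hmem q hq h.symm⟩
                · refine ⟨?_, h42, Inv_mono m j b (b+1) a qs (Nat.le_succ b) h43⟩
                  intro q hq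
                  rcases List.mem_cons.1 hq with rfl | hq'
                  · exact hiF
                  · exact h41 q hq'
                · intro p hp
                  rcases List.mem_cons.1 hp with rfl | hp'
                  · exact Or.inr (Or.inl ⟨(iD, iF), List.mem_cons_self, hiDm, w, rfl⟩)
                  · rcases h5 p hp' with h | ⟨q, hq, hq1, w', rfl⟩ |
                      ⟨i₀', qs', hsp', cw, ew, hmw, rfl⟩
                    · exact Or.inl h
                    · exact Or.inr (Or.inl ⟨q, List.mem_cons_of_mem _ hq, hq1, w', rfl⟩)
                    · simp only [Option.some.injEq, Prod.mk.injEq] at hsp'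
                      obtain ⟨he1, he2⟩ := hsp'
                      subst he1; subst he2
                      exact Or.inr (Or.inr ⟨i₀, qs, rfl, cw, ew, hmw, rfl⟩)
          | none =>
            have h3' : σ.length + 0 ≤ b := h3
            have h4' : a = j + 1 := h4
            by_cases hmem : ∃ q ∈ σ, q.2 = iF
            · obtain ⟨q, hqσ, hq2⟩ := hmem
              refine ⟨dD m j q.1 (h1 q hqσ) w, a, Or.inl rfl, ?_⟩
              refine ⟨σ, none, h1, h2, (by show σ.length + 0 ≤ b + 1; omega), h4, ?_⟩
              intro p hp
              rcases List.mem_cons.1 hp with rfl | hp'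
              · exact Or.inr (Or.inl ⟨q, hqσ, h1 q hqσ, w, by rw [hq2]; rfl⟩)
              · rcases h5 p hp' with h | h | ⟨i₀', qs', hsp', rest⟩
                · exact Or.inl h
                · exact Or.inr (Or.inl h)
                · exact absurd hsp' (by simp)
            · push_neg at hmem
              obtain ⟨iD, hiDfresh⟩ := exists_fresh
                ((σ.map Prod.fst).toFinset ∪ {specIdx m}) (by
                  have hc1 : ((σ.map Prod.fst).toFinset ∪ {specIdx m}).card ≤
                      (σ.map Prod.fst).toFinset.card + 1 := by
                    simpa using Finset.card_union_le (σ.map Prod.fst).toFinset {specIdx m}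
                  have hc2 := (σ.map Prod.fst).toFinset_card_le
                  simp only [List.length_map] at hc2
                  omega)
              simp only [Finset.mem_union, Finset.mem_singleton, List.mem_toFinset,
                List.mem_map, not_or, not_exists] at hiDfresh
              obtain ⟨hiD1, hiD2⟩ := hiDfresh
              have hiDm : iD.1 ≠ m := fun h => hiD2 (Fin.ext h)
              have hiDs : ∀ q ∈ σ, q.1 ≠ iD := fun q hq h => hiD1 q ⟨hq, h⟩
              refine ⟨dD m j iD hiDm w, a, Or.inl rfl, ?_⟩
              refine ⟨(iD, iF) :: σ, none, ?_, ?_,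
                (by show σ.length + 1 + 0 ≤ b + 1; omega), h4, ?_⟩
              · intro q hq
                rcases List.mem_cons.1 hq with rfl | hq'
                · exact hiDm
                · exact h1 q hq'
              · refine List.Pairwise.cons ?_ h2
                intro q hq
                exact ⟨fun h => (hiDs q hq) h.symm, fun h => hmem q hq h.symm⟩
              · intro p hp
                rcases List.mem_cons.1 hp with rfl | hp'
                · exact Or.inr (Or.inl ⟨(iD, iF), List.mem_cons_self, hiDm, w, rfl⟩)
                · rcases h5 p hp' with h | ⟨q, hq, hq1, w', rfl⟩ | ⟨i₀', qs', hsp', rest⟩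
                  · exact Or.inl h
                  · exact Or.inr (Or.inl ⟨q, List.mem_cons_of_mem _ hq, hq1, w', rfl⟩)
                  · exact absurd hsp' (by simp)
      -- ==================== forthD (j+1) ====================
      · rintro b a ps ⟨σ, sp, h1, h2, h3, h4, h5⟩ hb hpre x
        rcases x with u | ⟨iD, u⟩
        · -- Spoiler plays the root of Q2
          cases u
          refine ⟨(Q1 m (j+1)).root, a, Or.inl rfl,
            Inv_mono m (j+1) b (b+1) a _ (Nat.le_succ b) ⟨σ, sp, h1, h2, h3, h4, ?_⟩⟩
          intro p hp
          rcases List.mem_cons.1 hp with rfl | hp'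
          · exact Or.inl rfl
          · exact h5 p hp'
        · by_cases hiDm : iD.1 = m
          · -- the special branch of Q2
            have hiDeq : iD = specIdx m := Fin.ext hiDm
            subst hiDeq
            set e : (Q1 m j).V := vcast (gtree_eq_spec m j) u with he
            have hx : (Sum.inr ⟨specIdx m, u⟩ : (Q2 m (j+1)).V) = dS m j e := by
              unfold dS
              rw [he, vcast_vcast (gtree_eq_spec m j).symm u]
              exact rfl
            rw [hx]
            match hspe : sp with
            | some (i₀, qs) =>
              have h3' : σ.length + 1 ≤ b := h3
              obtain ⟨h41, h42, h43⟩ : (∀ q ∈ σ, q.2 ≠ i₀) ∧ a ≤ j ∧ Inv m j b a qs := h4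
              have hpre' : ¬(a = 0 ∧ Odd j) := by
                intro ⟨ha, hod⟩
                exact hpre ⟨ha, Nat.even_add_one.mpr (Nat.not_even_iff_odd.mpr hod)⟩
              obtain ⟨c, a', hcase, hInv'⟩ := ihF b a qs h43 hb hpre' e
              refine ⟨f1 m j i₀ c, a', ?_, ?_⟩
              · rcases hcase with rfl | ⟨hs1, hs2⟩
                · exact Or.inl rfl
                · refine Or.inr ⟨hs1, ?_⟩
                  have hrw : j + 1 - a = (j - a) + 1 := by omega
                  rw [hrw]
                  exact Nat.even_add_one.mpr (Nat.not_even_iff_odd.mpr hs2)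
              · refine ⟨σ, some (i₀, (c, e) :: qs), h1, h2,
                  (by show σ.length + 1 ≤ b + 1; omega),
                  ⟨h41, Inv_le m j (b+1) a' _ hInv', hInv'⟩, ?_⟩
                intro p hp
                rcases List.mem_cons.1 hp with rfl | hp'
                · exact Or.inr (Or.inr ⟨i₀, (c, e) :: qs, rfl, c, e,
                    List.mem_cons_self, rfl⟩)
                · rcases h5 p hp' with h | ⟨q, hq, hq1, w', rfl⟩ |
                    ⟨i₀', qs', hsp', cw, ew, hmw, rfl⟩
                  · exact Or.inl h
                  · exact Or.inr (Or.inl ⟨q, hq, hq1, w', rfl⟩)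
                  · simp only [Option.some.injEq, Prod.mk.injEq] at hsp'
                    obtain ⟨he1, he2⟩ := hsp'
                    subst he1; subst he2
                    exact Or.inr (Or.inr ⟨i₀, (c, e) :: qs, rfl, cw, ew,
                      List.mem_cons_of_mem _ hmw, rfl⟩)
            | none =>
              -- ACTIVATION of the special branch
              have h3' : σ.length + 0 ≤ b := h3
              have h4' : a = j + 1 := h4
              obtain ⟨i₀, hi₀fresh⟩ := exists_fresh ((σ.map Prod.snd).toFinset) (by
                have hc2 := (σ.map Prod.snd).toFinset_card_le
                simp only [List.length_map] at hc2
                omega)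
              simp only [List.mem_toFinset, List.mem_map, not_exists] at hi₀fresh
              have hi₀s : ∀ q ∈ σ, q.2 ≠ i₀ := fun q hq h => hi₀fresh q ⟨hq, h⟩
              have hbase : Inv m j b j [] := Inv_nil m j b
              have hprej : ¬((j : ℕ) = 0 ∧ Odd j) := by
                rintro ⟨hj0, hod⟩
                rw [hj0] at hod
                simp [Nat.odd_iff] at hod
              obtain ⟨c, a'', hcase'', hInv''⟩ := ihF b j [] hbase hb hprej e
              have ha'' : a'' = j := by
                rcases hcase'' with rfl | ⟨hs1, hs2⟩
                · rfl
                · rw [Nat.sub_self] at hs2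
                  simp [Nat.odd_iff] at hs2
              rw [ha''] at hInv''
              refine ⟨f1 m j i₀ c, j, ?_, ?_⟩
              · refine Or.inr ⟨by omega, ?_⟩
                have hz : j + 1 - a = 0 := by omega
                rw [hz]
                exact Even.zero
              · refine ⟨σ, some (i₀, [(c, e)]), h1, h2,
                  (by show σ.length + 1 ≤ b + 1; omega),
                  ⟨hi₀s, le_refl j, hInv''⟩, ?_⟩
                intro p hp
                rcases List.mem_cons.1 hp with rfl | hp'
                · exact Or.inr (Or.inr ⟨i₀, [(c, e)], rfl, c, e, List.mem_cons_self, rfl⟩)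
                · rcases h5 p hp' with h | ⟨q, hq, hq1, w', rfl⟩ | ⟨i₀', qs', hsp', rest⟩
                  · exact Or.inl h
                  · exact Or.inr (Or.inl ⟨q, hq, hq1, w', rfl⟩)
                  · exact absurd hsp' (by simp)
          · -- a normal branch of Q2
            set w : (Q2 m j).V := vcast (gtree_eq_of_ne hiDm) u with hw
            have hx : (Sum.inr ⟨iD, u⟩ : (Q2 m (j+1)).V) = dD m j iD hiDm w := by
              unfold dD
              rw [hw, vcast_vcast (gtree_eq_of_ne hiDm).symm u]
              exact rfl
            rw [hx]
            by_cases hmem : ∃ q ∈ σ, q.1 = iD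
            · obtain ⟨q, hqσ, hq1⟩ := hmem
              refine ⟨f1 m j q.2 w, a, Or.inl rfl, ?_⟩
              refine ⟨σ, sp, h1, h2, Nat.le_succ_of_le h3, ?_, ?_⟩
              · match hspe2 : sp with
                | none => exact h4
                | some (i₀, qs) =>
                    have h4' : (∀ q ∈ σ, q.2 ≠ i₀) ∧ a ≤ j ∧ Inv m j b a qs := h4
                    exact ⟨h4'.1, h4'.2.1, Inv_mono m j b (b+1) a qs (Nat.le_succ b) h4'.2.2⟩
              · intro p hp
                rcases List.mem_cons.1 hp with rfl | hp'
                · refine Or.inr (Or.inl ⟨q, hqσ, h1 q hqσ, w, ?_⟩)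
                  have : dD m j iD hiDm w = dD m j q.1 (h1 q hqσ) w := by
                    rw [dD_eq_dD_iff]
                    exact ⟨hq1.symm, rfl⟩
                  rw [this]
                · exact h5 p hp'
            · push_neg at hmem
              match hspe : sp with
              | some (i₀, qs) =>
                have h3' : σ.length + 1 ≤ b := h3
                obtain ⟨h41, h42, h43⟩ : (∀ q ∈ σ, q.2 ≠ i₀) ∧ a ≤ j ∧ Inv m j b a qs := h4
                obtain ⟨iF, hiFfresh⟩ := exists_fresh
                  ((σ.map Prod.snd).toFinset ∪ {i₀}) (by
                    have hc1 : ((σ.map Prod.snd).toFinset ∪ {i₀}).card ≤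
                        (σ.map Prod.snd).toFinset.card + 1 := by
                      simpa using Finset.card_union_le (σ.map Prod.snd).toFinset {i₀}
                    have hc2 := (σ.map Prod.snd).toFinset_card_le
                    simp only [List.length_map] at hc2
                    omega)
                simp only [Finset.mem_union, Finset.mem_singleton, List.mem_toFinset,
                  List.mem_map, not_or, not_exists] at hiFfresh
                obtain ⟨hiF1, hiF2⟩ := hiFfresh
                have hiFs : ∀ q ∈ σ, q.2 ≠ iF := fun q hq h => hiF1 q ⟨hq, h⟩
                refine ⟨f1 m j iF w, a, Or.inl rfl, ?_⟩
                refine ⟨(iD, iF) :: σ, some (i₀, qs), ?_, ?_,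
                  (by show σ.length + 1 + 1 ≤ b + 1; omega), ?_, ?_⟩
                · intro q hq
                  rcases List.mem_cons.1 hq with rfl | hq'
                  · exact hiDm
                  · exact h1 q hq'
                · refine List.Pairwise.cons ?_ h2
                  intro q hq
                  exact ⟨fun h => hmem q hq h.symm, fun h => (hiFs q hq) h.symm⟩
                · refine ⟨?_, h42, Inv_mono m j b (b+1) a qs (Nat.le_succ b) h43⟩
                  intro q hq
                  rcases List.mem_cons.1 hq with rfl | hq'
                  · exact hiF2
                  · exact h41 q hq'
                · intro p hp
                  rcases List.mem_cons.1 hp with rfl | hp'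
                  · exact Or.inr (Or.inl ⟨(iD, iF), List.mem_cons_self, hiDm, w, rfl⟩)
                  · rcases h5 p hp' with h | ⟨q, hq, hq1, w', rfl⟩ |
                      ⟨i₀', qs', hsp', cw, ew, hmw, rfl⟩
                    · exact Or.inl h
                    · exact Or.inr (Or.inl ⟨q, List.mem_cons_of_mem _ hq, hq1, w', rfl⟩)
                    · simp only [Option.some.injEq, Prod.mk.injEq] at hsp'
                      obtain ⟨he1, he2⟩ := hsp'
                      subst he1; subst he2
                      exact Or.inr (Or.inr ⟨i₀, qs, rfl, cw, ew, hmw, rfl⟩)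
              | none =>
                have h3' : σ.length + 0 ≤ b := h3
                have h4' : a = j + 1 := h4
                obtain ⟨iF, hiFfresh⟩ := exists_fresh ((σ.map Prod.snd).toFinset) (by
                  have hc2 := (σ.map Prod.snd).toFinset_card_le
                  simp only [List.length_map] at hc2
                  omega)
                simp only [List.mem_toFinset, List.mem_map, not_exists] at hiFfresh
                have hiFs : ∀ q ∈ σ, q.2 ≠ iF := fun q hq h => hiFfresh q ⟨hq, h⟩
                refine ⟨f1 m j iF w, a, Or.inl rfl, ?_⟩
                refine ⟨(iD, iF) :: σ, none, ?_, ?_,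
                  (by show σ.length + 1 + 0 ≤ b + 1; omega), h4, ?_⟩
                · intro q hq
                  rcases List.mem_cons.1 hq with rfl | hq'
                  · exact hiDm
                  · exact h1 q hq'
                · refine List.Pairwise.cons ?_ h2
                  intro q hq
                  exact ⟨fun h => hmem q hq h.symm, fun h => (hiFs q hq) h.symm⟩
                · intro p hp
                  rcases List.mem_cons.1 hp with rfl | hp'
                  · exact Or.inr (Or.inl ⟨(iD, iF), List.mem_cons_self, hiDm, w, rfl⟩)
                  · rcases h5 p hp' with h | ⟨q, hq, hq1, w', rfl⟩ | ⟨i₀', qs', hsp', rest⟩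
                    · exact Or.inl h
                    · exact Or.inr (Or.inl ⟨q, List.mem_cons_of_mem _ hq, hq1, w', rfl⟩)
                    · exact absurd hsp' (by simp)

end EhrAux

namespace EhrAux

lemma dws_nil (T₁ T₂ : RTree) (side : Bool) (ps : List (T₁.V × T₂.V)) :
    DupWinsSched T₁ T₂ [] side ps ↔ GoodPairs T₁ T₂ ps := by
  rw [DupWinsSched]

lemma dws_zero (T₁ T₂ : RTree) (rest : List ℕ) (side : Bool) (ps : List (T₁.V × T₂.V)) :
    DupWinsSched T₁ T₂ (0 :: rest) side ps ↔ DupWinsSched T₁ T₂ rest (!side) ps := by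
  rw [DupWinsSched]

lemma dws_succ_true (T₁ T₂ : RTree) (n : ℕ) (rest : List ℕ) (ps : List (T₁.V × T₂.V)) :
    DupWinsSched T₁ T₂ ((n+1) :: rest) true ps ↔
      ∀ x : T₁.V, ∃ y : T₂.V, DupWinsSched T₁ T₂ (n :: rest) true ((x, y) :: ps) := by
  rw [DupWinsSched]; simp

lemma dws_succ_false (T₁ T₂ : RTree) (n : ℕ) (rest : List ℕ) (ps : List (T₁.V × T₂.V)) :
    DupWinsSched T₁ T₂ ((n+1) :: rest) false ps ↔
      ∀ y : T₂.V, ∃ x : T₁.V, DupWinsSched T₁ T₂ (n :: rest) false ((x, y) :: ps) := by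
  rw [DupWinsSched]; simp

lemma GoodPairs_swap (T₁ T₂ : RTree) (ps : List (T₁.V × T₂.V)) :
    GoodPairs T₂ T₁ (ps.map Prod.swap) → GoodPairs T₁ T₂ ps := by
  intro h p hp q hq
  have := h p.swap (List.mem_map_of_mem (f := Prod.swap) hp) q.swap (List.mem_map_of_mem (f := Prod.swap) hq)
  exact ⟨this.1.symm, this.2.symm⟩

/-- The game-level condition relating the remaining schedule to the active
level of the invariant. -/
def COND (s : ℕ) (n r a : ℕ) (side : Bool) : Prop :=
  ((if 0 < n then 1 else 0) + r ≤ a) ∨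
    ((if 0 < n then 1 else 0) + r ≤ a + 1 ∧
      ¬ (cond side (Odd (s - a)) (Even (s - a))) ∧ 0 < n)

lemma main_step (s k m : ℕ) (r n : ℕ)
    (IH : ∀ (side : Bool) (a b : ℕ) (ps : List ((Q1 m s).V × (Q2 m s).V)),
      Inv m s b a (ps.map Prod.swap) →
      b + (n + r * k) ≤ m → COND s n r a side →
      DupWinsSched (Q1 m s) (Q2 m s) (n :: List.replicate r k) side ps) :
    ∀ (side : Bool) (a b : ℕ) (ps : List ((Q1 m s).V × (Q2 m s).V)),
      Inv m s b a (ps.map Prod.swap) →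
      b + (n + 1 + r * k) ≤ m → COND s (n+1) r a side →
      DupWinsSched (Q1 m s) (Q2 m s) ((n+1) :: List.replicate r k) side ps := by
  intro side a b ps hInv hbud hcnt
  have hb : b < m := by omega
  have has : a ≤ s := Inv_le m s b a _ hInv
  cases side with
  | true =>
      rw [dws_succ_true]
      intro x
      have hpre : ¬(a = 0 ∧ Odd s) := by
        rintro ⟨rfl, hodd⟩
        rcases hcnt with h | ⟨h, hcd, -⟩
        · simp at h
        · exact hcd (by simpa using hodd)
      obtain ⟨x', a', hcase, hInv'⟩ := (forth m s).1 b a _ hInv hb hpre x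
      refine ⟨x', IH true a' (b+1) ((x, x') :: ps) ?_ (by omega) ?_⟩
      · simpa using hInv'
      · rcases hcase with rfl | ⟨ha1, hpar⟩
        · rcases hcnt with h | ⟨h, hcd, -⟩
          · exact Or.inl (by by_cases hn : 0 < n <;> simp [hn] at h ⊢ <;> omega)
          · by_cases hn : 0 < n
            · exact Or.inr ⟨by simp [hn] at h ⊢; omega, hcd, hn⟩
            · have hn0 : n = 0 := by omega
              subst hn0
              exact Or.inl (by simp at h ⊢; omega)
        · have hcl : (if 0 < n + 1 then 1 else 0) + r ≤ a := by
            rcases hcnt with h | ⟨h, hcd, -⟩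
            · exact h
            · exact absurd hpar hcd
          have h1r : 1 + r ≤ a := by simpa using hcl
          have hs1 : s - a' = (s - a) + 1 := by omega
          have hncd : ¬ Odd (s - a') := by
            rw [hs1]
            simp [Nat.odd_add_one]
            exact hpar
          by_cases hn : 0 < n
          · exact Or.inr ⟨by simp [hn]; omega, by simpa using hncd, hn⟩
          · have hn0 : n = 0 := by omega
            subst hn0
            exact Or.inl (by simp; omega)
  | false =>
      rw [dws_succ_false]
      intro x
      have hpre : ¬(a = 0 ∧ Even s) := by
        rintro ⟨rfl, heven⟩
        rcases hcnt with h | ⟨h, hcd, -⟩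
        · simp at h
        · exact hcd (by simpa using heven)
      obtain ⟨x', a', hcase, hInv'⟩ := (forth m s).2 b a _ hInv hb hpre x
      refine ⟨x', IH false a' (b+1) ((x', x) :: ps) ?_ (by omega) ?_⟩
      · simpa using hInv'
      · rcases hcase with rfl | ⟨ha1, hpar⟩
        · rcases hcnt with h | ⟨h, hcd, -⟩
          · exact Or.inl (by by_cases hn : 0 < n <;> simp [hn] at h ⊢ <;> omega)
          · by_cases hn : 0 < n
            · exact Or.inr ⟨by simp [hn] at h ⊢; omega, hcd, hn⟩
            · have hn0 : n = 0 := by omega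
              subst hn0
              exact Or.inl (by simp at h ⊢; omega)
        · have hcl : (if 0 < n + 1 then 1 else 0) + r ≤ a := by
            rcases hcnt with h | ⟨h, hcd, -⟩
            · exact h
            · exact absurd hpar hcd
          have h1r : 1 + r ≤ a := by simpa using hcl
          have hs1 : s - a' = (s - a) + 1 := by omega
          have hncd : ¬ Even (s - a') := by
            rw [hs1]
            simp [Nat.even_add_one]
            exact hpar
          by_cases hn : 0 < n
          · exact Or.inr ⟨by simp [hn]; omega, by simpa using hncd, hn⟩
          · have hn0 : n = 0 := by omega
            subst hn0
            exact Or.inl (by simp; omega)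

theorem main (s k m : ℕ) :
    ∀ (r n : ℕ) (side : Bool) (a b : ℕ) (ps : List ((Q1 m s).V × (Q2 m s).V)),
      Inv m s b a (ps.map Prod.swap) →
      b + (n + r * k) ≤ m → COND s n r a side →
      DupWinsSched (Q1 m s) (Q2 m s) (n :: List.replicate r k) side ps := by
  intro r
  induction r with
  | zero =>
      intro n
      induction n with
      | zero =>
          intro side a b ps hInv hbud hcnt
          rw [List.replicate_zero, dws_zero, dws_nil]
          exact GoodPairs_swap _ _ ps (Inv_good m s b a _ hInv)
      | succ n ihn =>
          exact main_step s k m 0 n ihn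
  | succ r ihr =>
      intro n
      induction n with
      | zero =>
          intro side a b ps hInv hbud hcnt
          rw [dws_zero, List.replicate_succ]
          apply ihr k (!side) a b ps hInv (by
            have hmu : (r+1) * k = k + r * k := by ring
            rw [hmu] at hbud
            simpa using hbud)
          rcases hcnt with h | ⟨h, hcd, hn⟩
          · simp at h
            by_cases hk : 0 < k
            · exact Or.inl (by simp [hk]; omega)
            · exact Or.inl (by simp [hk]; omega)
          · exact absurd hn (by omega)
      | succ n ihn =>
          exact main_step s k m (r+1) n ihn

end EhrAux
/-- For every positive `s`, positive `k` and `m ≥ s·k`, Duplicator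
wins `ehr[T₁^{(s,k,m)}, T₂^{(s,k,m)}, s; k]` (whichever tree Spoiler starts
on). -/
theorem dup_wins_ehr_trees (s k m : ℕ) (hs : 0 < s) (hk : 0 < k) (hm : s * k ≤ m) :
    ∀ side : Bool,
      DupWinsSched (Tree1 s k m) (Tree2 s k m) (List.replicate s k) side
        [((Tree1 s k m).root, (Tree2 s k m).root)] := by
  intro side
  obtain ⟨s', rfl⟩ : ∃ s', s = s' + 1 := ⟨s - 1, by omega⟩
  rw [List.replicate_succ]
  have hInv0 : EhrAux.Inv m (s'+1) 0 (s'+1)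
      (([((Tree1 (s'+1) k m).root, (Tree2 (s'+1) k m).root)]).map Prod.swap) := by
    refine ⟨[], none, by simp, by simp, by simp, rfl, ?_⟩
    intro p hp
    replace hp := List.mem_singleton.1 hp
    exact Or.inl (by rw [hp]; rfl)
  have hbud : 0 + (k + s' * k) ≤ m := by
    have hmul : k + s' * k = (s' + 1) * k := by ring
    omega
  have hcnt : EhrAux.COND (s'+1) k s' (s'+1) side := by
    left
    simp only [hk, if_pos]
    omega
  exact EhrAux.main (s'+1) k m s' k side (s'+1) 0 _ hInv0 hbud hcnt
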